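/- Let U_1, U_2 ∈ ℝ^{n×r} with n ≥ r and U_1^T U_1 = U_2^T U_2 = I. Then there exists an orthogonal matrix O ∈ ℝ^{r×r} (i.e., O^T O = I) such that ‖U_1 − U_2 O‖_F^2 ≤ 2 ‖(I − U_1 U_1^T) U_2 U_2^T‖_F^2; that is, min over O in the orthogonal group O(r) of ‖U_1 − U_2 O‖_F^2 is at most 2 ‖sin Θ(U_1, U_2)‖_F^2. -/

import Mathlib

open scoped BigOperators
open Matrix

noncomputable section

namespace MJ

/-- Euclidean (ℓ2) norm of a finite vector. -/
def l2 {k : ℕ} (v : Fin k → ℝ) : ℝ := Real.sqrt (∑ j, v j ^ 2)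

/-- ℓ1 norm of a finite vector. -/
def l1 {k : ℕ} (v : Fin k → ℝ) : ℝ := ∑ i, |v i|

/-- Maximum absolute row sum (matrix ∞-norm). -/
def rowSumNorm {m k : ℕ} (A : Matrix (Fin m) (Fin k) ℝ) : ℝ := ⨆ i, ∑ j, |A i j|

/-- Frobenius norm. -/
def frob {m k : ℕ} (A : Matrix (Fin m) (Fin k) ℝ) : ℝ := Real.sqrt (∑ i, ∑ j, A i j ^ 2)

/-- Spectral norm (ℓ2 operator norm). -/
def spec {m k : ℕ} (A : Matrix (Fin m) (Fin k) ℝ) : ℝ :=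
  sSup {c : ℝ | ∃ x : Fin k → ℝ, l2 x ≤ 1 ∧ c = l2 (A.mulVec x)}

/-- `i`-th largest singular value (1-indexed), via Courant–Fischer max-min. -/
def singVal {m k : ℕ} (A : Matrix (Fin m) (Fin k) ℝ) (i : ℕ) : ℝ :=
  sSup {c : ℝ | ∃ V : Submodule ℝ (Fin k → ℝ), Module.finrank ℝ V = i ∧
    ∀ x ∈ V, c * l2 x ≤ l2 (A.mulVec x)}

/-- Row-stochastic matrix. -/
def RowStochastic {k : ℕ} (P : Matrix (Fin k) (Fin k) ℝ) : Prop :=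
  (∀ i j, 0 ≤ P i j) ∧ ∀ i, ∑ j, P i j = 1

/-- Probability vector. -/
def IsProbVec {k : ℕ} (v : Fin k → ℝ) : Prop := (∀ i, 0 ≤ v i) ∧ ∑ i, v i = 1

/-- Stationary distribution: a probability vector with πᵀ P = πᵀ. -/
def IsStationary {k : ℕ} (P : Matrix (Fin k) (Fin k) ℝ) (piv : Fin k → ℝ) : Prop :=
  IsProbVec piv ∧ ∀ j, ∑ i, piv i * P i j = piv j

/-- Ergodicity (irreducible + aperiodic ⟺ primitive for finite chains). -/
def Ergodic' {k : ℕ} (P : Matrix (Fin k) (Fin k) ℝ) : Prop :=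
  ∃ t : ℕ, ∀ i j, 0 < (P ^ t) i j

/-- ε-mixing time: τ(ε) = min{t : max_i (1/2)‖(P^t)(i,:) − π‖₁ ≤ ε}. -/
def mixingTime {k : ℕ} (P : Matrix (Fin k) (Fin k) ℝ) (piv : Fin k → ℝ) (ε : ℝ) : ℕ :=
  sInf {t : ℕ | ∀ i, (1/2) * ∑ j, |(P ^ t) i j - piv j| ≤ ε}

/-- Full SVD decomposition predicate: A = U S Vᵀ with U, V orthogonal and S diagonal
with nonnegative entries arranged in descending order. -/
def IsSVD {m k : ℕ} (A : Matrix (Fin m) (Fin k) ℝ) (U : Matrix (Fin m) (Fin m) ℝ)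
    (S : Matrix (Fin m) (Fin k) ℝ) (V : Matrix (Fin k) (Fin k) ℝ) : Prop :=
  Uᵀ * U = 1 ∧ Vᵀ * V = 1 ∧ A = U * S * Vᵀ ∧
  (∀ (i : Fin m) (j : Fin k), (i : ℕ) ≠ (j : ℕ) → S i j = 0) ∧
  (∀ i j, 0 ≤ S i j) ∧
  (∀ (a b : ℕ) (ham : a < m) (hak : a < k) (hbm : b < m) (hbk : b < k),
    a ≤ b → S ⟨b, hbm⟩ ⟨b, hbk⟩ ≤ S ⟨a, ham⟩ ⟨a, hak⟩)

/-- `Ur` consists of the first `r` left singular vectors of `A`. -/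
def IsLeftSingTrunc {m k : ℕ} (A : Matrix (Fin m) (Fin k) ℝ) (r : ℕ)
    (Ur : Matrix (Fin m) (Fin r) ℝ) : Prop :=
  ∃ U S V, IsSVD A U S V ∧ ∃ h : r ≤ m, ∀ (i : Fin m) (j : Fin r),
    Ur i j = U i ⟨(j : ℕ), lt_of_lt_of_le j.isLt h⟩

/-- `Vr` consists of the first `r` right singular vectors of `A`. -/
def IsRightSingTrunc {m k : ℕ} (A : Matrix (Fin m) (Fin k) ℝ) (r : ℕ)
    (Vr : Matrix (Fin k) (Fin r) ℝ) : Prop :=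
  IsLeftSingTrunc Aᵀ r Vr

/-- The matrix (I − EEᵀ)(FFᵀ), whose spectral/Frobenius norm is the sinΘ distance
between the column spaces of `E` and `F` (for `E`, `F` with orthonormal columns). -/
def sinThetaMat {k r : ℕ} (E F : Matrix (Fin k) (Fin r) ℝ) : Matrix (Fin k) (Fin k) ℝ :=
  (1 - E * Eᵀ) * (F * Fᵀ)

/-- Membership matrix: each row has exactly one entry 1 and all others 0. -/
def IsMembership {k r : ℕ} (M : Matrix (Fin k) (Fin r) ℝ) : Prop :=
  ∀ i, ∃ j, M i j = 1 ∧ ∀ j', j' ≠ j → M i j' = 0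

/-- A family of finsets forming a partition of `Fin k`. -/
def IsPartition {k r : ℕ} (Ω : Fin r → Finset (Fin k)) : Prop :=
  (∀ a b, a ≠ b → Disjoint (Ω a) (Ω b)) ∧ Finset.univ.biUnion Ω = Finset.univ

/-- `P` is aggregatable w.r.t. partition `Ω`: rows within the same cluster coincide. -/
def Aggregatable {k r : ℕ} (P : Matrix (Fin k) (Fin k) ℝ) (Ω : Fin r → Finset (Fin k)) : Prop :=
  ∀ s, ∀ i ∈ Ω s, ∀ j ∈ Ω s, ∀ c, P i c = P j c

/-- Misclustering rate: min over bijections of the relative misclustering counts. -/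
def MR {k r : ℕ} (Ω Ωh : Fin r → Finset (Fin k)) : ℝ :=
  ⨅ σ : Equiv.Perm (Fin r), ∑ j, (((Ω j) \ (Ωh (σ j))).card : ℝ) / ((Ω j).card : ℝ)

/-- k-means objective on the rows of `U`. -/
def kmeansObj {k r : ℕ} (U : Matrix (Fin k) (Fin r) ℝ) (Ωh : Fin r → Finset (Fin k))
    (c : Fin r → Fin r → ℝ) : ℝ :=
  ∑ s, ∑ i ∈ Ωh s, ∑ j, (U i j - c s j) ^ 2

/-- Optimal value of the k-means problem on the rows of `U`. -/
def kmeansOpt {k r : ℕ} (U : Matrix (Fin k) (Fin r) ℝ) : ℝ :=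
  sInf {v : ℝ | ∃ Ωh c, IsPartition Ωh ∧ v = kmeansObj U Ωh c}

/-- A (1+ε) approximate solution of the k-means problem on the rows of `U`. -/
def IsApproxKMeans {k r : ℕ} (U : Matrix (Fin k) (Fin r) ℝ) (ε : ℝ)
    (Ωh : Fin r → Finset (Fin k)) (c : Fin r → Fin r → ℝ) : Prop :=
  IsPartition Ωh ∧ kmeansObj U Ωh c ≤ (1 + ε) * kmeansOpt U

/-- Optimal value of the k-means problem in membership-matrix form. -/
def kmeansOptM {k r : ℕ} (U : Matrix (Fin k) (Fin r) ℝ) : ℝ :=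
  sInf {v : ℝ | ∃ (M : Matrix (Fin k) (Fin r) ℝ) (C : Matrix (Fin r) (Fin r) ℝ),
    IsMembership M ∧ v = frob (M * C - U) ^ 2}

/-- Number of t ∈ {1,…,N} with x_{t−1} = i. -/
def countState {k N : ℕ} (x : Fin (N+1) → Fin k) (i : Fin k) : ℕ :=
  (Finset.univ.filter fun t : Fin N => x t.castSucc = i).card

/-- Number of t ∈ {1,…,N} with x_{t−1} = i and x_t = j. -/
def countTrans {k N : ℕ} (x : Fin (N+1) → Fin k) (i j : Fin k) : ℕ :=
  (Finset.univ.filter fun t : Fin N => x t.castSucc = i ∧ x t.succ = j).card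

/-- Empirical state distribution. -/
def empPi {k N : ℕ} (x : Fin (N+1) → Fin k) (i : Fin k) : ℝ :=
  (countState x i : ℝ) / (N : ℝ)

/-- Empirical frequency matrix. -/
def empF {k N : ℕ} (x : Fin (N+1) → Fin k) : Matrix (Fin k) (Fin k) ℝ :=
  Matrix.of fun i j => (countTrans x i j : ℝ) / (N : ℝ)

/-- Empirical transition matrix (uniform row if a state never occurs). -/
def empMatrix {k N : ℕ} (x : Fin (N+1) → Fin k) : Matrix (Fin k) (Fin k) ℝ :=
  Matrix.of fun i j =>
    if countState x i = 0 then 1 / (k : ℝ)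
    else (countTrans x i j : ℝ) / (countState x i : ℝ)

/-- Probability weight of a finite Markov-chain path with initial distribution `pi0`. -/
def pathWeight {k : ℕ} (N : ℕ) (P : Matrix (Fin k) (Fin k) ℝ) (pi0 : Fin k → ℝ)
    (x : Fin (N+1) → Fin k) : ℝ :=
  pi0 (x 0) * ∏ t : Fin N, P (x t.castSucc) (x t.succ)

/-- Probability of an event over Markov-chain trajectories of length N+1. -/
def pathProb {k : ℕ} (N : ℕ) (P : Matrix (Fin k) (Fin k) ℝ) (pi0 : Fin k → ℝ)
    (E : Set ((Fin (N+1)) → Fin k)) : ℝ :=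
  ∑ x : Fin (N+1) → Fin k, E.indicator (pathWeight N P pi0) x

end MJ

section StmtFourAux

open Matrix

private lemma dotT {m k : ℕ} (A : Matrix (Fin m) (Fin k) ℝ) (x : Fin k → ℝ) (y : Fin m → ℝ) :
    (A *ᵥ x) ⬝ᵥ y = x ⬝ᵥ (Aᵀ *ᵥ y) := by
  simp only [dotProduct, Matrix.mulVec, Matrix.transpose_apply, Finset.sum_mul,
    Finset.mul_sum]
  rw [Finset.sum_comm]
  exact Finset.sum_congr rfl fun i _ => Finset.sum_congr rfl fun j _ => by ring

private lemma frob_sq {m k : ℕ} (A : Matrix (Fin m) (Fin k) ℝ) :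
    MJ.frob A ^ 2 = Matrix.trace (Aᵀ * A) := by
  rw [MJ.frob, Real.sq_sqrt (by positivity)]
  simp only [Matrix.trace, Matrix.diag, Matrix.mul_apply, Matrix.transpose_apply]
  rw [Finset.sum_comm]
  exact Finset.sum_congr rfl fun i _ => Finset.sum_congr rfl fun j _ => by ring

private lemma dot_self_zero {k : ℕ} {x : Fin k → ℝ} (h : x ⬝ᵥ x = 0) : x = 0 := by
  funext i
  have h0 : ∀ j ∈ Finset.univ, (0:ℝ) ≤ x j * x j := fun j _ => mul_self_nonneg _
  have := (Finset.sum_eq_zero_iff_of_nonneg h0).mp h i (Finset.mem_univ i)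
  simpa [mul_self_eq_zero] using this

end StmtFourAux

open MJ in
/-- alignment of orthonormal frames by an orthogonal matrix. -/
theorem stmt4 {n r : ℕ} (hnr : r ≤ n) (U1 U2 : Matrix (Fin n) (Fin r) ℝ)
    (h1 : U1ᵀ * U1 = 1) (h2 : U2ᵀ * U2 = 1) :
    ∃ O : Matrix (Fin r) (Fin r) ℝ, Oᵀ * O = 1 ∧
      frob (U1 - U2 * O) ^ 2 ≤ 2 * frob (sinThetaMat U1 U2) ^ 2 := by
  classical
  set H : Matrix (Fin r) (Fin r) ℝ := U2ᵀ * U1 with hH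
  set S : Matrix (Fin r) (Fin r) ℝ := Hᵀ * H with hSdef
  have hconj : Hᴴ = Hᵀ := by
    ext i j; simp [Matrix.conjTranspose_apply]
  have hpsd : S.PosSemidef := by
    have := Matrix.posSemidef_conjTranspose_mul_self H
    rwa [hconj] at this
  have hS : S.IsHermitian := hpsd.1
  set d : Fin r → ℝ := hS.eigenvalues with hd
  set v : Fin r → (Fin r → ℝ) := fun j => ⇑(hS.eigenvectorBasis j) with hv
  -- orthonormality of eigenvectors in dot-product form
  have hvv : ∀ i j, v i ⬝ᵥ v j = if i = j then 1 else 0 := by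
    intro i j
    have := (orthonormal_iff_ite (𝕜 := ℝ)).mp hS.eigenvectorBasis.orthonormal i j
    simpa [PiLp.inner_apply, RCLike.inner_apply, dotProduct, v, mul_comm] using this
  have hSv : ∀ j, S *ᵥ v j = d j • v j := fun j => hS.mulVec_eigenvectorBasis j
  have hHvv : ∀ i j, (H *ᵥ v i) ⬝ᵥ (H *ᵥ v j) = if i = j then d j else 0 := by
    intro i j
    rw [dotT, Matrix.mulVec_mulVec, ← hSdef, hSv, dotProduct_smul, hvv]
    simp [smul_eq_mul, mul_ite]
  have hd0 : ∀ j, 0 ≤ d j := fun j => hpsd.eigenvalues_nonneg j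
  -- d j ≤ 1
  have hd1 : ∀ j, d j ≤ 1 := by
    intro j
    set w : Fin n → ℝ := U1 *ᵥ v j with hw
    set z : Fin r → ℝ := U2ᵀ *ᵥ w with hz
    have hHvz : H *ᵥ v j = z := by
      rw [hH, ← Matrix.mulVec_mulVec, ← hw, hz]
    have hww : w ⬝ᵥ w = 1 := by
      have : w ⬝ᵥ w = v j ⬝ᵥ ((U1ᵀ * U1) *ᵥ v j) := by
        rw [hw, dotT, Matrix.mulVec_mulVec]
      rw [this, h1, Matrix.one_mulVec, hvv]
      simp
    have hzz : z ⬝ᵥ z = w ⬝ᵥ (U2 *ᵥ z) := by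
      conv_lhs => rw [hz, dotT, Matrix.transpose_transpose]
    have hUz : (U2 *ᵥ z) ⬝ᵥ (U2 *ᵥ z) = z ⬝ᵥ z := by
      rw [dotT, Matrix.mulVec_mulVec, h2, Matrix.one_mulVec]
    have hcs : (w ⬝ᵥ (U2 *ᵥ z)) ^ 2 ≤ (w ⬝ᵥ w) * ((U2 *ᵥ z) ⬝ᵥ (U2 *ᵥ z)) := by
      have := Finset.sum_mul_sq_le_sq_mul_sq Finset.univ w (U2 *ᵥ z)
      simpa [dotProduct, pow_two, mul_self_eq_zero] using this
    have hznn : 0 ≤ z ⬝ᵥ z := Finset.sum_nonneg fun i _ => mul_self_nonneg _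
    have hdj : d j = z ⬝ᵥ z := by
      have := hHvv j j
      rw [if_pos rfl] at this
      rw [← this, hHvz]
    rw [hdj]
    nlinarith [hcs, hzz, hww, hUz, hznn]
  have hHv0 : ∀ j, d j = 0 → H *ᵥ v j = 0 := by
    intro j hj
    apply dot_self_zero
    rw [hHvv j j]; simp [hj]
  -- left singular vectors
  set u : Fin r → EuclideanSpace ℝ (Fin r) :=
    fun j => (Real.sqrt (d j))⁻¹ • WithLp.toLp 2 (H *ᵥ v j) with hu
  set s : Set (Fin r) := {j | d j ≠ 0} with hs
  have horth : Orthonormal ℝ (s.restrict u) := by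
    rw [orthonormal_iff_ite]
    rintro ⟨i, hi⟩ ⟨j, hj⟩
    have hij : (H *ᵥ v i) ⬝ᵥ (H *ᵥ v j) = if i = j then d j else 0 := hHvv i j
    have : (inner ℝ (u i) (u j) : ℝ) =
        (Real.sqrt (d i))⁻¹ * ((Real.sqrt (d j))⁻¹ * ((H *ᵥ v i) ⬝ᵥ (H *ᵥ v j))) := by
      simp only [hu, PiLp.inner_apply, RCLike.inner_apply, starRingEnd_apply, star_trivial,
        PiLp.smul_apply, Pi.smul_apply, smul_eq_mul, dotProduct, Finset.mul_sum, PiLp.toLp_apply]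
      exact Finset.sum_congr rfl fun p _ => by ring
    rw [show inner ℝ (s.restrict u ⟨i, hi⟩) (s.restrict u ⟨j, hj⟩) = inner ℝ (u i) (u j) from rfl, this, hij]
    by_cases hij' : i = j
    · subst hij'
      have hdpos : 0 < d i := lt_of_le_of_ne (hd0 i) (Ne.symm hi)
      have hsq : Real.sqrt (d i) * Real.sqrt (d i) = d i := Real.mul_self_sqrt (hd0 i)
      have hspos : 0 < Real.sqrt (d i) := Real.sqrt_pos.mpr hdpos
      rw [if_pos rfl, ← hsq]
      field_simp
      simp [Real.sqrt_sq hspos.le]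
    · have : (⟨i, hi⟩ : s) ≠ ⟨j, hj⟩ := by simpa using hij'
      simp [hij', this]
  obtain ⟨b, hb⟩ := horth.exists_orthonormalBasis_extension_of_card_eq
    (by simp [finrank_euclideanSpace])
  have hbb : ∀ i j, (⇑(b i) : Fin r → ℝ) ⬝ᵥ ⇑(b j) = if i = j then 1 else 0 := by
    intro i j
    have := (orthonormal_iff_ite (𝕜 := ℝ)).mp b.orthonormal i j
    simpa [PiLp.inner_apply, RCLike.inner_apply, dotProduct, mul_comm] using this
  -- matrices whose columns are the bases
  set V : Matrix (Fin r) (Fin r) ℝ := Matrix.of fun p j => v j p with hV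
  set B : Matrix (Fin r) (Fin r) ℝ := Matrix.of fun p j => b j p with hB
  have hVtV : Vᵀ * V = 1 := by
    ext i j
    simpa [Matrix.mul_apply, Matrix.one_apply, dotProduct, hV] using hvv i j
  have hBtB : Bᵀ * B = 1 := by
    ext i j
    simpa [Matrix.mul_apply, Matrix.one_apply, dotProduct, hB] using hbb i j
  have hVVt : V * Vᵀ = 1 := mul_eq_one_comm.mp hVtV
  refine ⟨B * Vᵀ, ?_, ?_⟩
  · rw [Matrix.transpose_mul, Matrix.transpose_transpose, Matrix.mul_assoc,
      ← Matrix.mul_assoc Bᵀ, hBtB, Matrix.one_mul, hVVt]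
  set O : Matrix (Fin r) (Fin r) ℝ := B * Vᵀ with hO
  -- trace of Oᵀ * H
  have hmulcol : ∀ (A : Matrix (Fin r) (Fin r) ℝ) (q j : Fin r),
      (A * V) q j = (A *ᵥ v j) q := by
    intro A q j
    simp [Matrix.mul_apply, Matrix.mulVec, dotProduct, hV]
  have htO : Matrix.trace (Oᵀ * H) = ∑ j, Real.sqrt (d j) := by
    have h1' : Oᵀ * H = V * (Bᵀ * H) := by
      rw [hO, Matrix.transpose_mul, Matrix.transpose_transpose, Matrix.mul_assoc]
    rw [h1', Matrix.trace_mul_comm, Matrix.mul_assoc]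
    rw [Matrix.trace]
    apply Finset.sum_congr rfl
    intro j _
    have hdiag : (Bᵀ * (H * V)).diag j = (⇑(b j) : Fin r → ℝ) ⬝ᵥ (H *ᵥ v j) := by
      simp only [Matrix.diag, Matrix.mul_apply, Matrix.transpose_apply, dotProduct,
        Matrix.mulVec, hB, hV, Matrix.of_apply, PiLp.toLp_apply]
    rw [hdiag]
    by_cases hj : d j = 0
    · rw [hHv0 j hj]; simp [hj]
    · have hbj : ⇑(b j) = ⇑(u j) := by rw [hb j hj]
      have : (⇑(b j) : Fin r → ℝ) ⬝ᵥ (H *ᵥ v j) =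
          (Real.sqrt (d j))⁻¹ * ((H *ᵥ v j) ⬝ᵥ (H *ᵥ v j)) := by
        rw [hbj]
        simp only [hu, dotProduct, PiLp.smul_apply, Pi.smul_apply, smul_eq_mul,
          Finset.mul_sum, PiLp.toLp_apply]
        exact Finset.sum_congr rfl fun p _ => by ring
      rw [this, hHvv j j]
      have hdpos : 0 < d j := lt_of_le_of_ne (hd0 j) (Ne.symm hj)
      have hsq : Real.sqrt (d j) * Real.sqrt (d j) = d j := Real.mul_self_sqrt (hd0 j)
      have hspos : 0 < Real.sqrt (d j) := Real.sqrt_pos.mpr hdpos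
      rw [if_pos rfl, ← hsq]
      field_simp
      simp [Real.sqrt_sq hspos.le]
  -- trace of S
  have htS : Matrix.trace S = ∑ j, d j := by
    have : S = S * (V * Vᵀ) := by rw [hVVt, Matrix.mul_one]
    rw [this, ← Matrix.mul_assoc, Matrix.trace_mul_comm, Matrix.trace]
    apply Finset.sum_congr rfl
    intro j _
    have : (Vᵀ * (S * V)).diag j = v j ⬝ᵥ (S *ᵥ v j) := by
      simp only [Matrix.diag, Matrix.mul_apply, Matrix.transpose_apply, dotProduct,
        Matrix.mulVec, hV, Matrix.of_apply]
    rw [this, hSv j, dotProduct_smul, hvv]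
    simp
  -- the two Frobenius norms as traces
  have htrO : Matrix.trace ((1 : Matrix (Fin r) (Fin r) ℝ)) = (r : ℝ) := by
    simp [Matrix.trace_one]
  have hOtO : Oᵀ * O = 1 := by
    rw [hO, Matrix.transpose_mul, Matrix.transpose_transpose, Matrix.mul_assoc,
      ← Matrix.mul_assoc Bᵀ, hBtB, Matrix.one_mul, hVVt]
  have hL : frob (U1 - U2 * O) ^ 2 = 2 * r - 2 * Matrix.trace (Oᵀ * H) := by
    rw [frob_sq]
    have hexp : (U1 - U2 * O)ᵀ * (U1 - U2 * O) =
        U1ᵀ * U1 - U1ᵀ * (U2 * O) - (U2 * O)ᵀ * U1 + (U2 * O)ᵀ * (U2 * O) := by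
      simp only [Matrix.transpose_sub, Matrix.sub_mul, Matrix.mul_sub]
      abel
    have h3 : (U2 * O)ᵀ * (U2 * O) = 1 := by
      rw [Matrix.transpose_mul, Matrix.mul_assoc, ← Matrix.mul_assoc U2ᵀ, h2, Matrix.one_mul,
        hOtO]
    have h4 : (U2 * O)ᵀ * U1 = Oᵀ * H := by
      rw [Matrix.transpose_mul, Matrix.mul_assoc, hH]
    have h5 : Matrix.trace (U1ᵀ * (U2 * O)) = Matrix.trace (Oᵀ * H) := by
      rw [← Matrix.trace_transpose, Matrix.transpose_mul, Matrix.transpose_transpose, h4]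
    rw [hexp, Matrix.trace_add, Matrix.trace_sub, Matrix.trace_sub, h1, h3, h4, h5, htrO]
    ring
  have hR : frob (sinThetaMat U1 U2) ^ 2 = (r : ℝ) - Matrix.trace S := by
    rw [frob_sq, MJ.sinThetaMat]
    set P1 : Matrix (Fin n) (Fin n) ℝ := U1 * U1ᵀ with hP1
    set P2 : Matrix (Fin n) (Fin n) ℝ := U2 * U2ᵀ with hP2
    have hP1s : P1ᵀ = P1 := by rw [hP1, Matrix.transpose_mul, Matrix.transpose_transpose]
    have hP2s : P2ᵀ = P2 := by rw [hP2, Matrix.transpose_mul, Matrix.transpose_transpose]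
    have hP1i : P1 * P1 = P1 := by
      rw [hP1, Matrix.mul_assoc, ← Matrix.mul_assoc U1ᵀ, h1, Matrix.one_mul]
    have hP2i : P2 * P2 = P2 := by
      rw [hP2, Matrix.mul_assoc, ← Matrix.mul_assoc U2ᵀ, h2, Matrix.one_mul]
    have hG : ((1 - P1) * P2)ᵀ * ((1 - P1) * P2) = P2 * P2 - P2 * (P1 * P2) := by
      rw [Matrix.transpose_mul, Matrix.transpose_sub, Matrix.transpose_one, hP1s, hP2s]
      have e1 : (1 - P1) * ((1 - P1) * P2) = (1 - P1) * P2 := by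
        rw [← Matrix.mul_assoc]
        have e0 : (1 - P1) * (1 - P1) = 1 - P1 := by
          have : (1 - P1) * (1 - P1) = 1 - P1 - P1 + P1 * P1 := by noncomm_ring
          rw [this, hP1i]; abel
        rw [e0]
      rw [Matrix.mul_assoc, e1]
      noncomm_ring
    rw [hG, Matrix.trace_sub, hP2i]
    have ht2 : Matrix.trace P2 = (r : ℝ) := by
      rw [hP2, Matrix.trace_mul_comm, h2, htrO]
    have ht3 : Matrix.trace (P2 * (P1 * P2)) = Matrix.trace S := by
      rw [Matrix.trace_mul_comm, Matrix.mul_assoc, hP2i, hP2, hP1, Matrix.mul_assoc,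
        Matrix.trace_mul_comm, ← Matrix.mul_assoc]
      have hfold : U1ᵀ * U2 * (U2ᵀ * U1) = S := by
        rw [hSdef, hH, Matrix.transpose_mul, Matrix.transpose_transpose]
      rw [Matrix.mul_assoc (U1ᵀ * U2), hfold]
    rw [ht2, ht3]
  rw [hL, hR, htO, htS]
  have key : ∑ j, d j ≤ ∑ j, Real.sqrt (d j) := by
    apply Finset.sum_le_sum
    intro j _
    nlinarith [Real.sq_sqrt (hd0 j), Real.sqrt_nonneg (d j), hd0 j, hd1 j]
  linarith
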